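/- Let S(z) = Σ_{n≥1} s_n·z^n ∈ ℚ[[z]] and let U(z) = Σ_{n≥0} u_n·z^n be the unique formal power series over ℚ with constant coefficient u_0 = 1 satisfying z·U′(z) = −S(z)·U(z). Then u_1 = 0 and, for every n ≥ 2 (with the convention e_0 = 0), u_n = (1/(n(n−1)))·Σ_{k=0}^{n−1} (3n−k−3)·u_k − (4/(n(n−1)))·Σ_{k=0}^{n−1} (n−2k−1)·e_{n−k}·u_k + (4/(n(n−1)))·Σ_{k=0}^{n−1} (Σ_{j=0}^{n−k−1} e_j)·u_k. -/

import Mathlib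

/-- Plane binary trees: a leaf, or an ordered pair of plane binary trees. -/
inductive PTree : Type where
  | leaf : PTree
  | node : PTree → PTree → PTree
deriving DecidableEq

namespace PTree

/-- Number of leaves of a plane binary tree. -/
def leaves : PTree → ℕ
  | leaf => 1
  | node l r => leaves l + leaves r

/-- Number of root ancestral configurations:
`c(leaf) = 0`, `c(node l r) = (c l + 1) * (c r + 1)`. -/
def c : PTree → ℕ
  | leaf => 0
  | node l r => (c l + 1) * (c r + 1)

/-- The finite set of plane binary trees with `n` leaves. -/
def trees : ℕ → Finset PTree
  | 0 => ∅
  | 1 => {leaf}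
  | (n+2) =>
      (Finset.Icc 1 (n+1)).attach.biUnion fun j =>
        ((trees j.1) ×ˢ (trees (n+2-j.1))).image fun p => node p.1 p.2
decreasing_by
  · have h := Finset.mem_Icc.mp j.2; omega
  · have h := Finset.mem_Icc.mp j.2; omega

end PTree

namespace PTree

/-- Yule–Harding weight: `w(leaf) = 1`,
`w(node l r) = w l * w r / (leaves l + leaves r - 1)`. -/
def w : PTree → ℚ
  | leaf => 1
  | node l r => w l * w r / ((leaves l + leaves r - 1 : ℕ) : ℚ)

end PTree

namespace PTree

/-- Yule–Harding mean number of root configurations (`e 0 = 0` since `trees 0 = ∅`). -/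
def e (n : ℕ) : ℚ := ∑ t ∈ trees n, w t * (c t : ℚ)

end PTree

namespace PTree

/-- Yule–Harding second moment of the number of root configurations. -/
def s (n : ℕ) : ℚ := ∑ t ∈ trees n, w t * (c t : ℚ) ^ 2

end PTree


namespace PTree

theorem leaves_of_mem : ∀ n, ∀ t ∈ trees n, leaves t = n := by
  intro n
  induction n using Nat.strong_induction_on with
  | _ n ih =>
    match n with
    | 0 => simp [trees]
    | 1 => intro t ht; simp [trees] at ht; subst ht; rfl
    | (m+2) =>
      intro t ht
      rw [trees] at ht
      obtain ⟨j, -, hmem⟩ := Finset.mem_biUnion.mp ht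
      obtain ⟨p, hp, rfl⟩ := Finset.mem_image.mp hmem
      obtain ⟨h1, h2⟩ := Finset.mem_product.mp hp
      have hj := Finset.mem_Icc.mp j.2
      have e1 := ih j.1 (by omega) p.1 h1
      have e2 := ih (m+2-j.1) (by omega) p.2 h2
      simp [leaves, e1, e2]; omega

/-- master sum splitting lemma -/
theorem sum_trees_succ {M : Type*} [AddCommMonoid M] (n : ℕ) (f : PTree → M) :
    ∑ t ∈ trees (n+2), f t
      = ∑ j ∈ Finset.Icc 1 (n+1), ∑ l ∈ trees j, ∑ r ∈ trees (n+2-j), f (node l r) := by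
  rw [trees]
  rw [Finset.sum_biUnion]
  · rw [← Finset.sum_attach (Finset.Icc 1 (n+1))
      (fun j => ∑ l ∈ trees j, ∑ r ∈ trees (n+2-j), f (node l r))]
    refine Finset.sum_congr rfl fun j _ => ?_
    rw [Finset.sum_image]
    · rw [Finset.sum_product]
    · rintro ⟨a,b⟩ - ⟨a',b'⟩ - h
      simpa using h
  · rintro j - j' - hne
    simp only [Finset.disjoint_left]
    rintro x hx hx'
    obtain ⟨p, hp, rfl⟩ := Finset.mem_image.mp hx
    obtain ⟨q, hq, hpq⟩ := Finset.mem_image.mp hx'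
    obtain ⟨h1, -⟩ := Finset.mem_product.mp hp
    obtain ⟨h1', -⟩ := Finset.mem_product.mp hq
    have : p.1 = q.1 := by injection hpq with ha hb; exact ha.symm
    apply hne
    exact Subtype.ext ((leaves_of_mem _ _ h1).symm.trans (this ▸ leaves_of_mem _ _ h1'))

/-- total Yule-Harding weight -/
def WW (m : ℕ) : ℚ := ∑ t ∈ trees m, w t
def aQ (m : ℕ) : ℚ := ∑ t ∈ trees m, w t * ((c t : ℚ) + 1) ^ 2
def bQ (m : ℕ) : ℚ := ∑ t ∈ trees m, w t * ((c t : ℚ) + 1)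

theorem trees_zero : trees 0 = ∅ := by rw [trees]
theorem trees_one : trees 1 = {leaf} := by rw [trees]

theorem w_node_mem {n j : ℕ} (hj : j ∈ Finset.Icc 1 (n+1)) {l r : PTree}
    (hl : l ∈ trees j) (hr : r ∈ trees (n+2-j)) :
    w (node l r) = w l * w r / ((n : ℚ) + 1) := by
  have hj' := Finset.mem_Icc.mp hj
  have e1 := leaves_of_mem _ _ hl
  have e2 := leaves_of_mem _ _ hr
  have : leaves l + leaves r - 1 = n + 1 := by omega
  rw [w, this]
  push_cast
  ring_nf

theorem s_rec (n : ℕ) :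
    s (n+2) = (∑ j ∈ Finset.Icc 1 (n+1), aQ j * aQ (n+2-j)) / ((n : ℚ) + 1) := by
  rw [s, sum_trees_succ]
  rw [Finset.sum_div]
  refine Finset.sum_congr rfl fun j hj => ?_
  rw [aQ, aQ, Finset.sum_mul_sum, Finset.sum_div]
  refine Finset.sum_congr rfl fun l hl => ?_
  rw [Finset.sum_div]
  refine Finset.sum_congr rfl fun r hr => ?_
  rw [w_node_mem hj hl hr, c]
  push_cast
  ring

theorem e_rec (n : ℕ) :
    e (n+2) = (∑ j ∈ Finset.Icc 1 (n+1), bQ j * bQ (n+2-j)) / ((n : ℚ) + 1) := by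
  rw [e, sum_trees_succ]
  rw [Finset.sum_div]
  refine Finset.sum_congr rfl fun j hj => ?_
  rw [bQ, bQ, Finset.sum_mul_sum, Finset.sum_div]
  refine Finset.sum_congr rfl fun l hl => ?_
  rw [Finset.sum_div]
  refine Finset.sum_congr rfl fun r hr => ?_
  rw [w_node_mem hj hl hr, c]
  push_cast
  ring

theorem WW_rec (n : ℕ) :
    WW (n+2) = (∑ j ∈ Finset.Icc 1 (n+1), WW j * WW (n+2-j)) / ((n : ℚ) + 1) := by
  rw [WW, sum_trees_succ]
  rw [Finset.sum_div]
  refine Finset.sum_congr rfl fun j hj => ?_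
  rw [WW, WW, Finset.sum_mul_sum, Finset.sum_div]
  refine Finset.sum_congr rfl fun l hl => ?_
  rw [Finset.sum_div]
  refine Finset.sum_congr rfl fun r hr => ?_
  rw [w_node_mem hj hl hr]

theorem WW_eq_one : ∀ n, 1 ≤ n → WW n = 1 := by
  intro n
  induction n using Nat.strong_induction_on with
  | _ n ih =>
    match n with
    | 0 => intro h; omega
    | 1 => intro _; simp [WW, trees_one, w]
    | (m+2) =>
      intro _
      rw [WW_rec]
      rw [Finset.sum_congr rfl (fun j hj => by
        have hj' := Finset.mem_Icc.mp hj
        rw [ih j (by omega) (by omega), ih (m+2-j) (by omega) (by omega), one_mul])]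
      rw [Finset.sum_const, Nat.card_Icc]
      simp only [Nat.add_sub_cancel, nsmul_eq_mul, mul_one, Nat.cast_add, Nat.cast_one]
      exact div_self (by positivity)

theorem aQ_eq (m : ℕ) (hm : 1 ≤ m) : aQ m = s m + 2 * e m + 1 := by
  rw [← WW_eq_one m hm, aQ, s, e, WW, Finset.mul_sum, ← Finset.sum_add_distrib,
    ← Finset.sum_add_distrib]
  exact Finset.sum_congr rfl fun t _ => by ring

theorem bQ_eq (m : ℕ) (hm : 1 ≤ m) : bQ m = e m + 1 := by
  rw [← WW_eq_one m hm, bQ, e, WW, ← Finset.sum_add_distrib]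
  exact Finset.sum_congr rfl fun t _ => by ring

theorem s_zero : s 0 = 0 := by simp [s, trees_zero]
theorem s_one : s 1 = 0 := by simp [s, trees_one, c]
theorem e_zero : e 0 = 0 := by simp [e, trees_zero]
theorem e_one : e 1 = 0 := by simp [e, trees_one, c]

end PTree


namespace PTree

/-- `yy n` is `0` for `n = 0` and `1` otherwise (coefficients of `z/(1-z)`). -/
def yy (m : ℕ) : ℚ := if m = 0 then 0 else 1

def alphaC (m : ℕ) : ℚ := s m + 2 * e m + yy m
def betaC (m : ℕ) : ℚ := e m + yy m

theorem yy_zero : yy 0 = 0 := rfl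
theorem yy_pos {m : ℕ} (hm : 1 ≤ m) : yy m = 1 := if_neg (by omega)
theorem alphaC_zero : alphaC 0 = 0 := by simp [alphaC, s_zero, e_zero, yy_zero]
theorem betaC_zero : betaC 0 = 0 := by simp [betaC, e_zero, yy_zero]
theorem alphaC_pos {m : ℕ} (hm : 1 ≤ m) : alphaC m = aQ m := by
  rw [alphaC, aQ_eq m hm, yy_pos hm]
theorem betaC_pos {m : ℕ} (hm : 1 ≤ m) : betaC m = bQ m := by
  rw [betaC, bQ_eq m hm, yy_pos hm]

theorem CS (n : ℕ) :
    (n : ℚ) * s n = s n + ∑ j ∈ Finset.range (n+1), alphaC j * alphaC (n-j) := by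
  match n with
  | 0 => simp [s_zero, alphaC_zero]
  | 1 => simp [s_one, Finset.sum_range_succ, alphaC_zero]
  | (m+2) =>
    rw [Finset.sum_range_succ, Nat.sub_self, alphaC_zero, mul_zero, add_zero,
      Finset.sum_range_succ', alphaC_zero, zero_mul, add_zero]
    have hsum : ∑ j ∈ Finset.range (m+1), alphaC (j+1) * alphaC (m+2-(j+1))
        = ∑ j ∈ Finset.Icc 1 (m+1), aQ j * aQ (m+2-j) := by
      rw [show Finset.Icc 1 (m+1) = Finset.Ico 1 (m+2) from (Finset.Ico_add_one_right_eq_Icc 1 (m+1)).symm,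
        Finset.sum_Ico_eq_sum_range]
      refine Finset.sum_congr rfl fun j hj => ?_
      have hj' := Finset.mem_range.mp hj
      rw [alphaC_pos (by omega), alphaC_pos (by omega)]
      congr 1 <;> congr 1 <;> omega
    rw [hsum]
    have := s_rec m
    have hne : ((m:ℚ)+1) ≠ 0 := by positivity
    rw [eq_div_iff hne] at this
    push_cast
    linear_combination this

theorem CE (n : ℕ) :
    (n : ℚ) * e n = e n + ∑ j ∈ Finset.range (n+1), betaC j * betaC (n-j) := by
  match n with
  | 0 => simp [e_zero, betaC_zero]
  | 1 => simp [e_one, Finset.sum_range_succ, betaC_zero]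
  | (m+2) =>
    rw [Finset.sum_range_succ, Nat.sub_self, betaC_zero, mul_zero, add_zero,
      Finset.sum_range_succ', betaC_zero, zero_mul, add_zero]
    have hsum : ∑ j ∈ Finset.range (m+1), betaC (j+1) * betaC (m+2-(j+1))
        = ∑ j ∈ Finset.Icc 1 (m+1), bQ j * bQ (m+2-j) := by
      rw [show Finset.Icc 1 (m+1) = Finset.Ico 1 (m+2) from (Finset.Ico_add_one_right_eq_Icc 1 (m+1)).symm,
        Finset.sum_Ico_eq_sum_range]
      refine Finset.sum_congr rfl fun j hj => ?_
      have hj' := Finset.mem_range.mp hj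
      rw [betaC_pos (by omega), betaC_pos (by omega)]
      congr 1 <;> congr 1 <;> omega
    rw [hsum]
    have := e_rec m
    have hne : ((m:ℚ)+1) ≠ 0 := by positivity
    rw [eq_div_iff hne] at this
    push_cast
    linear_combination this

theorem CY (n : ℕ) :
    (n : ℚ) * yy n = yy n + ∑ j ∈ Finset.range (n+1), yy j * yy (n-j) := by
  match n with
  | 0 => simp [yy_zero]
  | 1 => simp [Finset.sum_range_succ, yy_zero, yy]
  | (m+2) =>
    rw [Finset.sum_range_succ, Nat.sub_self, yy_zero, mul_zero, add_zero,
      Finset.sum_range_succ', yy_zero, zero_mul, add_zero]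
    have hsum : ∑ j ∈ Finset.range (m+1), yy (j+1) * yy (m+2-(j+1))
        = ∑ j ∈ Finset.range (m+1), 1 := by
      refine Finset.sum_congr rfl fun j hj => ?_
      have hj' := Finset.mem_range.mp hj
      rw [yy_pos (by omega), yy_pos (by omega), one_mul]
    rw [hsum, Finset.sum_const, Finset.card_range, yy_pos (by omega)]
    push_cast
    ring

end PTree


namespace PTree

open PowerSeries

noncomputable def Sps : ℚ⟦X⟧ := PowerSeries.mk s
noncomputable def Eps : ℚ⟦X⟧ := PowerSeries.mk e
noncomputable def Yps : ℚ⟦X⟧ := PowerSeries.mk yy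

theorem coeff_X_mul_deriv (f : ℚ⟦X⟧) (m : ℕ) :
    PowerSeries.coeff (R := ℚ) m ((X : ℚ⟦X⟧) * d⁄dX ℚ f) = (m : ℚ) * PowerSeries.coeff (R := ℚ) m f := by
  match m with
  | 0 => simp
  | (k+1) =>
    rw [PowerSeries.coeff_succ_X_mul, PowerSeries.coeff_derivative]
    push_cast; ring

theorem coeff_mul_range (f g : ℚ⟦X⟧) (n : ℕ) :
    PowerSeries.coeff (R := ℚ) n (f * g)
      = ∑ k ∈ Finset.range (n+1), PowerSeries.coeff (R := ℚ) k f * PowerSeries.coeff (R := ℚ) (n-k) g := by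
  rw [PowerSeries.coeff_mul, Finset.Nat.sum_antidiagonal_eq_sum_range_succ_mk]

theorem hP1 : (X : ℚ⟦X⟧) * d⁄dX ℚ Sps = (Sps + Eps + Eps + Yps) * (Sps + Eps + Eps + Yps) + Sps := by
  ext n
  rw [coeff_X_mul_deriv, map_add, coeff_mul_range]
  simp only [map_add, Sps, Eps, Yps, PowerSeries.coeff_mk]
  have := CS n
  rw [Finset.sum_congr rfl (fun j (hj : j ∈ Finset.range (n+1)) => by
    show _ = alphaC j * alphaC (n-j)
    rw [alphaC, alphaC]; ring)]
  linarith [CS n]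

theorem hP2 : (X : ℚ⟦X⟧) * d⁄dX ℚ Eps = (Eps + Yps) * (Eps + Yps) + Eps := by
  ext n
  rw [coeff_X_mul_deriv, map_add, coeff_mul_range]
  simp only [map_add, Eps, Yps, PowerSeries.coeff_mk]
  rw [Finset.sum_congr rfl (fun j (hj : j ∈ Finset.range (n+1)) => by
    show _ = betaC j * betaC (n-j)
    rw [betaC, betaC])]
  linarith [CE n]

theorem hPY : (X : ℚ⟦X⟧) * d⁄dX ℚ Yps = Yps * Yps + Yps := by
  ext n
  rw [coeff_X_mul_deriv, map_add, coeff_mul_range]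
  simp only [Yps, PowerSeries.coeff_mk]
  linarith [CY n]

end PTree


namespace PTree

open PowerSeries

def g2 (m : ℕ) : ℚ := 4 * e m + 2 * yy m
def hh (m : ℕ) : ℚ :=
  4*(m:ℚ)*e m - 4*e m - 4*(∑ j ∈ Finset.range m, e j) - 3*(m:ℚ)*yy m + 3*yy m

noncomputable def G2 : ℚ⟦X⟧ := PowerSeries.mk g2
noncomputable def Hs : ℚ⟦X⟧ := PowerSeries.mk hh

theorem g2_zero : g2 0 = 0 := by simp [g2, e_zero, yy_zero]
theorem hh_zero : hh 0 = 0 := by simp [hh, e_zero, yy_zero]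

theorem cEY (m : ℕ) : PowerSeries.coeff (R := ℚ) m (Eps * Yps) = ∑ j ∈ Finset.range m, e j := by
  rw [coeff_mul_range, Finset.sum_range_succ]
  simp only [Eps, Yps, PowerSeries.coeff_mk, Nat.sub_self, yy_zero, mul_zero, add_zero]
  refine Finset.sum_congr rfl fun k hk => ?_
  have := Finset.mem_range.mp hk
  rw [yy_pos (by omega), mul_one]

theorem hG2eq : G2 = (Eps + Eps + Yps) + (Eps + Eps + Yps) := by
  ext n
  simp only [G2, Eps, Yps, PowerSeries.coeff_mk, map_add, g2, yy]
  ring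

theorem hHseq : Hs =
    ((X : ℚ⟦X⟧) * d⁄dX ℚ Eps) + ((X : ℚ⟦X⟧) * d⁄dX ℚ Eps) + ((X : ℚ⟦X⟧) * d⁄dX ℚ Eps)
      + ((X : ℚ⟦X⟧) * d⁄dX ℚ Eps)
    - (Eps + Eps + Eps + Eps)
    - ((Eps*Yps) + (Eps*Yps) + (Eps*Yps) + (Eps*Yps))
    - (((X : ℚ⟦X⟧) * d⁄dX ℚ Yps) + ((X : ℚ⟦X⟧) * d⁄dX ℚ Yps) + ((X : ℚ⟦X⟧) * d⁄dX ℚ Yps))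
    + (Yps + Yps + Yps) := by
  ext n
  simp only [map_add, map_sub, coeff_X_mul_deriv, cEY]
  simp only [Hs, Eps, Yps, PowerSeries.coeff_mk, hh]
  ring

end PTree

open PowerSeries

/-- If `U = Σ u_n z^n` is the (unique) formal power series over `ℚ` with constant
coefficient `1` satisfying `z·U′(z) = −S(z)·U(z)` where `S(z) = Σ s_n z^n`, then
`u_1 = 0` and for `n ≥ 2` the coefficients satisfy the stated recurrence. -/
theorem U_coeff_recurrence (U : ℚ⟦X⟧)
    (hU0 : PowerSeries.coeff (R := ℚ) 0 U = 1)
    (hode : (X : ℚ⟦X⟧) * d⁄dX ℚ U = -(PowerSeries.mk PTree.s) * U) :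
    PowerSeries.coeff (R := ℚ) 1 U = 0 ∧
    ∀ n : ℕ, 2 ≤ n →
      PowerSeries.coeff (R := ℚ) n U =
          (1 / ((n : ℚ) * ((n : ℚ) - 1))) *
            ∑ k ∈ Finset.range n, (3 * (n : ℚ) - (k : ℚ) - 3) * PowerSeries.coeff (R := ℚ) k U
        - (4 / ((n : ℚ) * ((n : ℚ) - 1))) *
            ∑ k ∈ Finset.range n,
              ((n : ℚ) - 2 * (k : ℚ) - 1) * PTree.e (n - k) * PowerSeries.coeff (R := ℚ) k U
        + (4 / ((n : ℚ) * ((n : ℚ) - 1))) *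
            ∑ k ∈ Finset.range n,
              (∑ j ∈ Finset.range (n - k), PTree.e j) * PowerSeries.coeff (R := ℚ) k U := by
  classical
  open PTree in
  have h1 : (X : ℚ⟦X⟧) * d⁄dX ℚ U = -(Sps * U) := by
    rw [hode, neg_mul]; rfl
  have h2 : d⁄dX ℚ U + X * d⁄dX ℚ (d⁄dX ℚ U)
      = -(d⁄dX ℚ Sps * U + Sps * d⁄dX ℚ U) := by
    have h := congrArg (d⁄dX ℚ) h1
    simp only [Derivation.leibniz, smul_eq_mul, PowerSeries.derivative_X, map_neg, one_mul,
      mul_one] at h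
    linear_combination h
  have hu1 : PowerSeries.coeff (R := ℚ) 1 U = 0 := by
    have h := congrArg (PowerSeries.coeff (R := ℚ) 1) h1
    rw [coeff_X_mul_deriv, map_neg, coeff_mul_range] at h
    simp only [Finset.sum_range_succ, Finset.sum_range_zero, Sps, PowerSeries.coeff_mk,
      s_zero, s_one, zero_mul, add_zero, zero_add, neg_zero, Nat.cast_one, one_mul,
      Nat.sub_self, Nat.sub_zero] at h
    simpa using h
  refine ⟨hu1, ?_⟩
  intro n hn
  have hmain : (X : ℚ⟦X⟧) * (X * d⁄dX ℚ (d⁄dX ℚ U))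
      = ((X : ℚ⟦X⟧) * d⁄dX ℚ U) * G2 - U * Hs := by
    rw [hG2eq, hHseq]
    linear_combination (X : ℚ⟦X⟧) * h2 - U * hP1
      - (1 + Sps + (Eps+Eps+Yps) + (Eps+Eps+Yps)) * h1 + (4*U) * hP2 - (3*U) * hPY
  obtain ⟨m, rfl⟩ : ∃ m, n = m + 2 := ⟨n - 2, by omega⟩
  have hc := congrArg (PowerSeries.coeff (R := ℚ) (m+2)) hmain
  rw [PowerSeries.coeff_succ_X_mul, PowerSeries.coeff_succ_X_mul,
    PowerSeries.coeff_derivative, PowerSeries.coeff_derivative, map_sub,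
    coeff_mul_range, coeff_mul_range] at hc
  simp only [coeff_X_mul_deriv, G2, Hs, PowerSeries.coeff_mk] at hc
  set n := m + 2 with hn2
  rw [Finset.sum_range_succ (fun x => (x:ℚ) * PowerSeries.coeff (R := ℚ) x U * g2 (n - x)) n,
    Finset.sum_range_succ (fun x => PowerSeries.coeff (R := ℚ) x U * hh (n - x)) n,
    Nat.sub_self, g2_zero, hh_zero, mul_zero, mul_zero, add_zero, add_zero] at hc
  have hkey : (n:ℚ) * ((n:ℚ) - 1) * PowerSeries.coeff (R := ℚ) n U
      = ∑ k ∈ Finset.range n,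
          ((3 * (n : ℚ) - (k : ℚ) - 3)
            - 4 * ((n : ℚ) - 2 * (k : ℚ) - 1) * e (n - k)
            + 4 * (∑ j ∈ Finset.range (n - k), e j)) * PowerSeries.coeff (R := ℚ) k U := by
    have hterm : ∀ k ∈ Finset.range n,
        ((3 * (n : ℚ) - (k : ℚ) - 3)
            - 4 * ((n : ℚ) - 2 * (k : ℚ) - 1) * e (n - k)
            + 4 * (∑ j ∈ Finset.range (n - k), e j)) * PowerSeries.coeff (R := ℚ) k U
          = (k:ℚ) * PowerSeries.coeff (R := ℚ) k U * g2 (n - k)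
            - PowerSeries.coeff (R := ℚ) k U * hh (n - k) := by
      intro k hk
      have hkn := Finset.mem_range.mp hk
      have hcast : ((n - k : ℕ) : ℚ) = (n : ℚ) - (k : ℚ) := by
        push_cast [Nat.cast_sub hkn.le]; ring
      rw [g2, hh, yy_pos (by omega : 1 ≤ n - k), hcast]
      ring
    rw [Finset.sum_congr rfl hterm, Finset.sum_sub_distrib]
    have hnm : (n:ℚ) = (m:ℚ) + 2 := by rw [hn2]; push_cast; ring
    push_cast at hc
    linear_combination hc + (PowerSeries.coeff (R := ℚ) n U * ((n:ℚ) + (m:ℚ) + 1)) * hnm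
  have hs1 : ∑ k ∈ Finset.range n,
        ((3 * (n : ℚ) - (k : ℚ) - 3)
          - 4 * ((n : ℚ) - 2 * (k : ℚ) - 1) * e (n - k)
          + 4 * (∑ j ∈ Finset.range (n - k), e j)) * PowerSeries.coeff (R := ℚ) k U
      = (∑ k ∈ Finset.range n, (3 * (n : ℚ) - (k : ℚ) - 3) * PowerSeries.coeff (R := ℚ) k U)
        - 4 * (∑ k ∈ Finset.range n,
            ((n : ℚ) - 2 * (k : ℚ) - 1) * e (n - k) * PowerSeries.coeff (R := ℚ) k U)
        + 4 * (∑ k ∈ Finset.range n,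
            (∑ j ∈ Finset.range (n - k), e j) * PowerSeries.coeff (R := ℚ) k U) := by
    rw [Finset.mul_sum, Finset.mul_sum, ← Finset.sum_sub_distrib, ← Finset.sum_add_distrib]
    exact Finset.sum_congr rfl fun k _ => by ring
  rw [hs1] at hkey
  have h2n : (2:ℚ) ≤ (n:ℚ) := by exact_mod_cast hn
  have hD : (n:ℚ) * ((n:ℚ) - 1) ≠ 0 := mul_ne_zero (by linarith) (by linarith)
  have hfin : PowerSeries.coeff (R := ℚ) n U
      = ((∑ k ∈ Finset.range n, (3 * (n : ℚ) - (k : ℚ) - 3) * PowerSeries.coeff (R := ℚ) k U)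
        - 4 * (∑ k ∈ Finset.range n,
            ((n : ℚ) - 2 * (k : ℚ) - 1) * e (n - k) * PowerSeries.coeff (R := ℚ) k U)
        + 4 * (∑ k ∈ Finset.range n,
            (∑ j ∈ Finset.range (n - k), e j) * PowerSeries.coeff (R := ℚ) k U))
          / ((n:ℚ) * ((n:ℚ) - 1)) := by
    rw [eq_div_iff hD]
    linear_combination hkey
  rw [hfin]
  ring
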